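/- Let K be a field of characteristic p > 0 with a Hasse–Schmidt derivation ∂ and constants C_K. If x ∈ K satisfies xᵖ ∈ C_K, then x ∈ C_K. In other words, the field of constants is closed under taking p-th roots within K. -/

import Mathlib

open PowerSeries Polynomial

lemma poly_coeff_pow_char {K : Type} [Field K] (p : ℕ) [Fact p.Prime] [CharP K p]
    (q : K[X]) (n : ℕ) : (q ^ p).coeff (p * n) = (q.coeff n) ^ p := by
  rw [← Polynomial.map_frobenius_expand p q, Polynomial.coeff_map,
    Polynomial.coeff_expand_mul' (Fact.out : p.Prime).pos, frobenius_def]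

lemma ps_coeff_pow_char {K : Type} [Field K] (p : ℕ) [Fact p.Prime] [CharP K p]
    (φ : PowerSeries K) (n : ℕ) :
    PowerSeries.coeff (R := K) (p * n) (φ ^ p) = (PowerSeries.coeff (R := K) n φ) ^ p := by
  have hp : 0 < p := (Fact.out : p.Prime).pos
  set N := p * n + 1 with hN
  have h1 : p * n < N := Nat.lt_succ_self _
  have h2 : n < N := lt_of_le_of_lt (Nat.le_mul_of_pos_left n hp) h1
  calc PowerSeries.coeff (R := K) (p * n) (φ ^ p)
      = PowerSeries.coeff (R := K) (p * n) ((trunc N (φ ^ p) : K[X]) : PowerSeries K) := by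
        rw [coeff_coe_trunc_of_lt h1]
    _ = PowerSeries.coeff (R := K) (p * n)
        ((trunc N (((trunc N φ : K[X]) : PowerSeries K) ^ p) : K[X]) : PowerSeries K) := by
        rw [trunc_trunc_pow]
    _ = PowerSeries.coeff (R := K) (p * n) (((trunc N φ : K[X]) : PowerSeries K) ^ p) := by
        rw [coeff_coe_trunc_of_lt h1]
    _ = ((trunc N φ : K[X]) ^ p).coeff (p * n) := by
        rw [← Polynomial.coe_pow, Polynomial.coeff_coe]
    _ = ((trunc N φ : K[X]).coeff n) ^ p := poly_coeff_pow_char p _ n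
    _ = (PowerSeries.coeff (R := K) n φ) ^ p := by
        rw [coeff_trunc, if_pos h2]

/-- For a Hasse–Schmidt derivation on a field `K` of characteristic `p > 0`, the field of
constants is closed under `p`-th roots within `K`: if `xᵖ` is a constant then so is `x`. -/
theorem hasseSchmidt_constants_pth_root (K : Type) [Field K] (p : ℕ)
    [Fact p.Prime] [CharP K p] (d : ℕ → K → K)
    (f : K →+* PowerSeries K) (hf : ∀ a, f a = PowerSeries.mk fun i => d i a)
    (h0 : ∀ x, d 0 x = x) :
    ∀ x : K, (∀ i, 1 ≤ i → d i (x ^ p) = 0) → ∀ i, 1 ≤ i → d i x = 0 := by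
  intro x hx i hi
  have hp : 0 < p := (Fact.out : p.Prime).pos
  have key : (d i x) ^ p = d (p * i) (x ^ p) := by
    have : PowerSeries.coeff (R := K) (p * i) (f (x ^ p)) = PowerSeries.coeff (R := K) (p * i) ((f x) ^ p) := by
      rw [map_pow]
    rw [ps_coeff_pow_char p (f x) i] at this
    simpa [hf, PowerSeries.coeff_mk] using this.symm
  have : (d i x) ^ p = 0 := by
    rw [key, hx (p * i) (Nat.one_le_iff_ne_zero.mpr (by positivity))]
  exact pow_eq_zero_iff hp.ne' |>.mp this
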